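/- arXiv:2104.07449 — 3 statements merged into one kernel-verified Lean document; each statement's English description precedes it below -/
import Mathlib

section
/- Let Y be a Hermitian M×M matrix all of whose eigenvalues are ≥ 1, and let Z be an M×M Hermitian unitary matrix (Z = Z†, Z² = I). Then the matrix X = Y Z is diagonalizable over ℂ, has only real eigenvalues, and every eigenvalue λ of X satisfies |λ| ≥ 1. -/
open Matrix ComplexOrder

lemma herm_dot_real {M : ℕ} (A : Matrix (Fin M) (Fin M) ℂ) (hA : A.IsHermitian)
    (y : Fin M → ℂ) : (starRingEnd ℂ) (star y ⬝ᵥ A *ᵥ y) = star y ⬝ᵥ A *ᵥ y := by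
  have h1 : star (star y ⬝ᵥ A *ᵥ y) = star (A *ᵥ y) ⬝ᵥ star (star y) := by
    rw [star_dotProduct]; rw [star_star, star_star]
  rw [show (starRingEnd ℂ) (star y ⬝ᵥ A *ᵥ y) = star (star y ⬝ᵥ A *ᵥ y) from rfl, h1,
    star_star, star_mulVec, ← Matrix.dotProduct_mulVec, hA.eq]

lemma EuclideanSpace_inner_equiv_symm {M : ℕ} (x y : Fin M → ℂ) :
    inner ℂ ((WithLp.equiv 2 (Fin M → ℂ)).symm x) ((WithLp.equiv 2 (Fin M → ℂ)).symm y)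
      = star x ⬝ᵥ y := by
  rw [dotProduct_comm]; rfl

/-- If `Y` is Hermitian with all eigenvalues ≥ 1 and `Z` is a Hermitian unitary,
then `X = Y Z` is diagonalizable with real eigenvalues, all of modulus ≥ 1. -/
theorem stmt3 (M : ℕ) (Y Z : Matrix (Fin M) (Fin M) ℂ)
    (hYH : Y.IsHermitian) (hY1 : (Y - 1).PosSemidef)
    (hZH : Z.IsHermitian) (hZ2 : Z * Z = 1) :
    (∃ (P : Matrix (Fin M) (Fin M) ℂ) (d : Fin M → ℝ), IsUnit P.det ∧
      Y * Z = P * Matrix.diagonal (fun i => (d i : ℂ)) * P⁻¹) ∧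
    (∀ (lam : ℂ) (x : Fin M → ℂ), x ≠ 0 → (Y * Z).mulVec x = lam • x →
      lam.im = 0 ∧ 1 ≤ ‖lam‖) := by
  -- Y is positive definite
  have hYpd : Y.PosDef := by
    refine Matrix.PosDef.of_dotProduct_mulVec_pos hYH (fun x hx => ?_)
    have h1 := hY1.dotProduct_mulVec_nonneg x
    have h2 : (0 : ℂ) < star x ⬝ᵥ (1 : Matrix (Fin M) (Fin M) ℂ) *ᵥ x :=
      Matrix.PosDef.one.dotProduct_mulVec_pos hx
    have h3 : star x ⬝ᵥ Y *ᵥ x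
        = star x ⬝ᵥ (Y - 1) *ᵥ x + star x ⬝ᵥ (1 : Matrix (Fin M) (Fin M) ℂ) *ᵥ x := by
      rw [← dotProduct_add, ← add_mulVec, sub_add_cancel]
    rw [h3]
    exact lt_add_of_le_of_pos h1 h2
  constructor
  · -- diagonalizability
    have hYps := hYpd.posSemidef
    open MatrixOrder in
    set S := CFC.sqrt Y with hSdef
    have hSH : S.IsHermitian := by open MatrixOrder in exact (CFC.sqrt_nonneg Y).isSelfAdjoint
    have hSS : S * S = Y := by open MatrixOrder in exact CFC.sqrt_mul_sqrt_self Y (nonneg_iff_posSemidef.mpr hYps)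
    have hdetY : Y.det ≠ 0 := ne_of_gt (by exact_mod_cast hYpd.det_pos)
    have hdetS : IsUnit S.det := by
      rw [isUnit_iff_ne_zero]
      intro h
      apply hdetY
      rw [← hSS, det_mul, h, mul_zero]
    have hHH : (S * Z * S).IsHermitian := by
      unfold Matrix.IsHermitian
      rw [conjTranspose_mul, conjTranspose_mul, hSH.eq, hZH.eq]
      rw [mul_assoc]
    set U : Matrix (Fin M) (Fin M) ℂ := (hHH.eigenvectorUnitary : Matrix (Fin M) (Fin M) ℂ) with hUdef
    have hUU : U * star U = 1 := Unitary.mul_star_self_of_mem hHH.eigenvectorUnitary.2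
    have hU'U : star U * U = 1 := Unitary.star_mul_self_of_mem hHH.eigenvectorUnitary.2
    have hdetU : IsUnit U.det := Matrix.isUnit_det_of_right_inverse hUU
    refine ⟨S * U, hHH.eigenvalues, ?_, ?_⟩
    · rw [det_mul]; exact hdetS.mul hdetU
    · have hUinv : U⁻¹ = star U := inv_eq_left_inv hU'U
      have hSinv : S * S⁻¹ = 1 := mul_nonsing_inv S hdetS
      have hspec := hHH.spectral_theorem
      have hdiag : Matrix.diagonal (fun i => ((hHH.eigenvalues i : ℝ) : ℂ))
          = Matrix.diagonal (RCLike.ofReal ∘ hHH.eigenvalues) := rfl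
      rw [Matrix.mul_inv_rev, hUinv, hdiag]
      calc Y * Z = S * (S * Z * S) * S⁻¹ := by
            rw [show S * (S * Z * S) = (S * S) * Z * S by noncomm_ring, hSS, mul_assoc, mul_assoc,
              hSinv, mul_one]
        _ = S * (U * diagonal (RCLike.ofReal ∘ hHH.eigenvalues) * star U) * S⁻¹ := by
            rw [Unitary.conjStarAlgAut_apply] at hspec
            exact congrArg (fun T => S * T * S⁻¹) hspec
        _ = S * U * diagonal (RCLike.ofReal ∘ hHH.eigenvalues) * (star U * S⁻¹) := by noncomm_ring
  · -- eigenvalues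
    intro lam x hx hxeq
    set y := Z *ᵥ x with hy
    have hxy : x = Z *ᵥ y := by rw [hy, mulVec_mulVec, hZ2, one_mulVec]
    have hy0 : y ≠ 0 := fun h => hx (by rw [hxy, h, mulVec_zero])
    have hYy : Y *ᵥ y = lam • (Z *ᵥ y) := by
      rw [← hxy, hy, mulVec_mulVec, hxeq]
    set a := star y ⬝ᵥ Y *ᵥ y with ha
    set b := star y ⬝ᵥ Z *ᵥ y with hb
    set c := star y ⬝ᵥ y with hc
    have hab : a = lam * b := by
      rw [ha, hYy, dotProduct_smul, smul_eq_mul]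
    have haR : (starRingEnd ℂ) a = a := herm_dot_real Y hYH y
    have hbR : (starRingEnd ℂ) b = b := herm_dot_real Z hZH y
    have hcpos : (0 : ℂ) < c := by
      have := Matrix.PosDef.one.dotProduct_mulVec_pos hy0
      rwa [one_mulVec] at this
    have hac : c ≤ a := by
      have h1 := hY1.dotProduct_mulVec_nonneg y
      have h2 : a - c = star y ⬝ᵥ (Y - 1) *ᵥ y := by
        rw [ha, hc, sub_mulVec, dotProduct_sub, one_mulVec]
      have h3 : (0:ℂ) ≤ a - c := h2 ▸ h1
      exact sub_nonneg.mp h3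
    have hcre : 0 < c.re := (Complex.lt_def.mp hcpos).1
    have haim : a.im = 0 := by
      have h := congrArg Complex.im haR
      simp only [Complex.conj_im] at h; linarith
    have hbim : b.im = 0 := by
      have h := congrArg Complex.im hbR
      simp only [Complex.conj_im] at h; linarith
    have hare : c.re ≤ a.re := (Complex.le_def.mp hac).1
    have hb0 : b ≠ 0 := by
      intro h
      rw [h, mul_zero] at hab
      rw [hab] at hare
      simp at hare; linarith
    have hlamim : lam.im = 0 := by
      have h1 : a.im = lam.re * b.im + lam.im * b.re := by
        rw [hab]; simp [Complex.mul_im]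
      have hbre : b.re ≠ 0 := by
        intro h; exact hb0 (Complex.ext h hbim)
      rw [haim, hbim, mul_zero, zero_add] at h1
      field_simp at h1
      rcases mul_eq_zero.mp h1.symm with h | h
      · exact h
      · exact absurd h hbre
    refine ⟨hlamim, ?_⟩
    -- Cauchy-Schwarz: |b| ≤ c.re
    have habs : ‖b‖ ≤ c.re := by
      set u := (WithLp.equiv 2 (Fin M → ℂ)).symm y with hu
      set v := (WithLp.equiv 2 (Fin M → ℂ)).symm (Z *ᵥ y) with hv
      have hinner : (inner ℂ u v : ℂ) = b := EuclideanSpace_inner_equiv_symm y (Z *ᵥ y)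
      have hnu : ‖u‖ ^ 2 = c.re := by
        have h := norm_sq_eq_re_inner (𝕜 := ℂ) u
        rw [h, EuclideanSpace_inner_equiv_symm]
        rfl
      have hnv : ‖v‖ ^ 2 = c.re := by
        have h := norm_sq_eq_re_inner (𝕜 := ℂ) v
        rw [h, EuclideanSpace_inner_equiv_symm]
        have : star (Z *ᵥ y) ⬝ᵥ (Z *ᵥ y) = c := by
          rw [star_mulVec, ← Matrix.dotProduct_mulVec, mulVec_mulVec, hZH.eq, hZ2, one_mulVec]
        rw [this]
        rfl
      have hCS : ‖(inner ℂ u v : ℂ)‖ ≤ ‖u‖ * ‖v‖ := norm_inner_le_norm u v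
      have hnueq : ‖u‖ = Real.sqrt c.re := by
        rw [← hnu]; rw [Real.sqrt_sq (norm_nonneg u)]
      have hnveq : ‖v‖ = Real.sqrt c.re := by
        rw [← hnv]; rw [Real.sqrt_sq (norm_nonneg v)]
      rw [hinner, hnueq, hnveq, Real.mul_self_sqrt hcre.le] at hCS
      exact hCS
    have habsa : c.re ≤ ‖a‖ := le_trans hare (Complex.re_le_norm a)
    have : c.re ≤ ‖lam‖ * c.re := by
      calc c.re ≤ ‖a‖ := habsa
        _ = ‖lam‖ * ‖b‖ := by rw [hab]; exact norm_mul lam b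
        _ ≤ ‖lam‖ * c.re := by
            exact mul_le_mul_of_nonneg_left habs (norm_nonneg lam)
    nlinarith [hcre]
end

section
/- Let h be a Hermitian 2N×2N matrix, positive definite, with τ_z = diag(I_N,−I_N), and suppose (τ_z h)² = I (flat bands at ±1). Define h̃ = (1/4)(h + τ_z h τ_z + τ_z h τ_z h + h τ_z h τ_z). Then h̃ commutes with τ_z (i.e., h̃ is block diagonal / particle-number conserving) and h̃ is Hermitian. -/
open Matrix ComplexOrder

/-- For a flattened positive-definite bosonic BdG matrix `h` (so `(τ_z h)² = I`), the
matrix `h̃ = (1/4)(h + τ_z h τ_z + τ_z h τ_z h + h τ_z h τ_z)` is Hermitian and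
commutes with `τ_z`, i.e. it is particle-number conserving. -/
theorem stmt12 (N : ℕ)
    (τz h : Matrix (Fin N ⊕ Fin N) (Fin N ⊕ Fin N) ℂ)
    (hτz : τz = Matrix.fromBlocks 1 0 0 (-1))
    (hH : h.IsHermitian) (hpos : h.PosDef)
    (hflat : (τz * h) * (τz * h) = 1)
    (ht : Matrix (Fin N ⊕ Fin N) (Fin N ⊕ Fin N) ℂ)
    (hht : ht = ((1:ℂ)/4) • (h + τz * h * τz + τz * h * τz * h + h * τz * h * τz)) :
    ht.IsHermitian ∧ ht * τz = τz * ht := by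
  have hτ2 : τz * τz = 1 := by
    subst hτz
    simp [Matrix.fromBlocks_multiply, ← Matrix.fromBlocks_one]
  have hτ2' : ∀ M : Matrix (Fin N ⊕ Fin N) (Fin N ⊕ Fin N) ℂ,
      τz * (τz * M) = M := fun M => by rw [← mul_assoc, hτ2, one_mul]
  have hτH : τzᴴ = τz := by
    subst hτz
    simp [Matrix.fromBlocks_conjTranspose]
  constructor
  · show htᴴ = ht
    rw [hht]
    simp only [Matrix.conjTranspose_smul, Matrix.conjTranspose_add,
      Matrix.conjTranspose_mul, hH.eq, hτH]
    rw [show (star ((1:ℂ)/4) : ℂ) = ((1:ℂ)/4) by rw [star_div₀, star_one]; norm_num [Complex.ext_iff, Complex.star_def]]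
    congr 1
    simp only [mul_assoc]
    abel
  · rw [hht]
    rw [Matrix.smul_mul, Matrix.mul_smul]
    congr 1
    simp only [add_mul, mul_add, mul_assoc, hτ2, hτ2', mul_one, one_mul]
    abel
end

section
/- Let h be a Hermitian positive definite 2N×2N matrix and τ_z = diag(I_N, −I_N). Then D = τ_z h is diagonalizable with real nonzero eigenvalues. Moreover, every eigenvector of D with positive eigenvalue has positive symplectic norm and every eigenvector with negative eigenvalue has negative symplectic norm. -/
open Matrix ComplexOrder

/-- A positive definite BdG matrix `h` yields a dynamically stable dynamical matrix
`D = τ_z h`: `D` is diagonalizable with real nonzero eigenvalues, and eigenvectors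
with positive (negative) eigenvalue have positive (negative) symplectic norm. -/
theorem stmt17 (N : ℕ)
    (τz h : Matrix (Fin N ⊕ Fin N) (Fin N ⊕ Fin N) ℂ)
    (hτz : τz = Matrix.fromBlocks 1 0 0 (-1))
    (hpos : h.PosDef) :
    (∃ (P : Matrix (Fin N ⊕ Fin N) (Fin N ⊕ Fin N) ℂ)
      (d : (Fin N ⊕ Fin N) → ℝ), IsUnit P.det ∧ (∀ i, d i ≠ 0) ∧
      τz * h = P * Matrix.diagonal (fun i => (d i : ℂ)) * P⁻¹) ∧
    (∀ (lam : ℝ) (w : (Fin N ⊕ Fin N) → ℂ), w ≠ 0 →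
      (τz * h).mulVec w = (lam : ℂ) • w →
      (star w ⬝ᵥ τz.mulVec w).im = 0 ∧
      (0 < lam → 0 < (star w ⬝ᵥ τz.mulVec w).re) ∧
      (lam < 0 → (star w ⬝ᵥ τz.mulVec w).re < 0)) := by
  have hτ2 : τz * τz = 1 := by
    subst hτz
    rw [Matrix.fromBlocks_multiply]
    simp [Matrix.fromBlocks_one]
  have hτdet : τz.det ≠ 0 := by
    intro h0
    have := congrArg Matrix.det hτ2
    rw [Matrix.det_mul, h0, Matrix.det_one] at this
    simp at this
  set hs := (open scoped MatrixOrder in CFC.sqrt h) with hhs_def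
  have hsherm : hs.IsHermitian := (open scoped MatrixOrder in (CFC.sqrt_nonneg h).posSemidef.1)
  have hsmul : hs * hs = h :=
    (open scoped MatrixOrder in CFC.sqrt_mul_sqrt_self h hpos.posSemidef.nonneg)
  have hdet : IsUnit hs.det := by
    have hh : h.det ≠ 0 := hpos.det_pos.ne'
    rw [← hsmul, Matrix.det_mul] at hh
    exact (mul_ne_zero_iff.mp hh).1.isUnit
  set M := hs * τz * hs with hM_def
  have hMherm : M.IsHermitian := by
    unfold M
    rw [Matrix.IsHermitian, Matrix.conjTranspose_mul, Matrix.conjTranspose_mul,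
      hsherm.eq]
    have : τzᴴ = τz := by subst hτz; ext (i|i) (j|j) <;>
      simp [Matrix.conjTranspose_apply, Matrix.fromBlocks, Matrix.one_apply, eq_comm]
    rw [this, mul_assoc]
  set U : Matrix (Fin N ⊕ Fin N) (Fin N ⊕ Fin N) ℂ :=
    ((Matrix.IsHermitian.eigenvectorUnitary hMherm :
      Matrix.unitaryGroup (Fin N ⊕ Fin N) ℂ) : Matrix (Fin N ⊕ Fin N) (Fin N ⊕ Fin N) ℂ)
    with hU_def
  have hUunit : star U * U = 1 :=
    Matrix.mem_unitaryGroup_iff'.mp (Matrix.IsHermitian.eigenvectorUnitary hMherm).2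
  have hUinv : U⁻¹ = star U := Matrix.inv_eq_left_inv hUunit
  have hUdet : IsUnit U.det := by
    have := congrArg Matrix.det hUunit
    rw [Matrix.det_mul, Matrix.det_one] at this
    exact IsUnit.of_mul_eq_one _ ((mul_comm _ _).trans this)
  constructor
  · refine ⟨hs⁻¹ * U, hMherm.eigenvalues, ?_, ?_, ?_⟩
    · rw [Matrix.det_mul]
      exact ((Matrix.isUnit_nonsing_inv_det _ hdet)).mul hUdet
    · -- eigenvalues nonzero
      intro i
      have hMdet : M.det ≠ 0 := by
        unfold M
        rw [Matrix.det_mul, Matrix.det_mul]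
        exact mul_ne_zero (mul_ne_zero hdet.ne_zero hτdet) hdet.ne_zero
      rw [hMherm.det_eq_prod_eigenvalues] at hMdet
      intro h0
      exact hMdet (Finset.prod_eq_zero (Finset.mem_univ i) (Complex.ofReal_eq_zero.mpr h0))
    · have hspec := hMherm.spectral_theorem
      have hinv : (hs⁻¹ * U)⁻¹ = star U * hs := by
        rw [Matrix.mul_inv_rev, hUinv, Matrix.nonsing_inv_nonsing_inv _ hdet]
      rw [hinv]
      have h1 : hs⁻¹ * hs = 1 := Matrix.nonsing_inv_mul _ hdet
      have key : τz * h = hs⁻¹ * M * hs := by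
        rw [hM_def, ← hsmul]
        simp only [Matrix.mul_assoc]
        rw [← Matrix.mul_assoc hs⁻¹ hs, h1, Matrix.one_mul]
      have e1 : hs⁻¹ * M * hs =
          hs⁻¹ * (U * Matrix.diagonal (fun i => ((hMherm.eigenvalues i : ℝ) : ℂ))
            * star U) * hs :=
        congrArg (fun X => hs⁻¹ * X * hs) hspec
      exact key.trans (e1.trans (by simp only [Matrix.mul_assoc]))
  · intro lam w hw hew

    -- h w = lam • τz w
    have hhw : h.mulVec w = (lam : ℂ) • τz.mulVec w := by
      have h2 : τz.mulVec ((τz * h).mulVec w) = τz.mulVec ((lam : ℂ) • w) :=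
        congrArg _ hew
      rw [Matrix.mulVec_mulVec, ← Matrix.mul_assoc, hτ2, Matrix.one_mul,
        Matrix.mulVec_smul] at h2
      exact h2
    set s := star w ⬝ᵥ τz.mulVec w with hs_def
    set q := star w ⬝ᵥ h.mulVec w with hq_def
    have hq : q = (lam : ℂ) * s := by
      rw [hq_def, hhw, dotProduct_smul, smul_eq_mul, hs_def]
    have hqpos : 0 < q := hpos.dotProduct_mulVec_pos hw
    have hqre : 0 < q.re := by
      rw [Complex.lt_def] at hqpos
      simpa using hqpos.1
    have hqim : q.im = 0 := by
      rw [Complex.lt_def] at hqpos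
      simpa using hqpos.2.symm
    have hlam : lam ≠ 0 := by
      intro h0
      rw [h0] at hq
      simp at hq
      rw [hq] at hqre
      simp at hqre
    have hsim : s.im = 0 := by
      have : q.im = lam * s.im := by rw [hq]; simp
      rw [hqim] at this
      have := this.symm
      rcases mul_eq_zero.mp this with h1 | h2
      · exact absurd h1 hlam
      · exact h2
    have hsre : q.re = lam * s.re := by rw [hq]; simp
    refine ⟨hsim, ?_, ?_⟩
    · intro hl
      by_contra hns
      push_neg at hns
      have : q.re ≤ 0 := by rw [hsre]; exact mul_nonpos_of_nonneg_of_nonpos hl.le hns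
      linarith
    · intro hl
      by_contra hns
      push_neg at hns
      have : q.re ≤ 0 := by rw [hsre]; exact mul_nonpos_of_nonpos_of_nonneg hl.le hns
      linarith
end
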